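/- arXiv:1305.6873 — 4 statements merged into one kernel-verified Lean document; each statement's English description precedes it below -/
import Mathlib

section
/- Let X, X₁, X₂ be as in the context. Then for every k with 0 ≤ k ≤ m, the coefficient of z^k in det(I + z·X) equals Σ_{a=0}^{k} trΛ^a(X₁)·trΛ^{k−a}(X₂). (Lemma 'block 1(i)': on the Slodowy slice the first m characteristic-polynomial coefficients of X are the convolution of those of its diagonal blocks.) -/
open Polynomial

/-- `trΛ^k(M)`: the coefficient of `z^k` in `det(I + z·M)`. -/
noncomputable def trLambda {N : ℕ} (M : Matrix (Fin N) (Fin N) ℂ) (k : ℕ) : ℂ :=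
  ((1 + (Polynomial.X : ℂ[X]) • M.map Polynomial.C).det).coeff k

open Matrix

lemma aux_key {R : Type*} [CommRing R] {n m : ℕ} (z : R) (hz : z ^ (m + 3) = 0)
    (A : Matrix (Fin n) (Fin n) R) (B : Matrix (Fin n) (Fin (m + 2)) R)
    (Cm : Matrix (Fin (m + 2)) (Fin n) R) (D : Matrix (Fin (m + 2)) (Fin (m + 2)) R)
    [Invertible D]
    (hB0 : ∀ (i : Fin n) (a : Fin (m + 2)), a ≠ 0 → B i a = 0)
    (hBz : ∀ i : Fin n, ∃ c, B i 0 = z * c)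
    (hC0 : ∀ (a : Fin (m + 2)) (j : Fin n), a ≠ Fin.last (m + 1) → Cm a j = 0)
    (hCz : ∀ j : Fin n, ∃ c, Cm (Fin.last (m + 1)) j = z * c)
    (hD0 : ∀ a b : Fin (m + 2), (a : ℕ) + 2 ≤ (b : ℕ) → D a b = 0)
    (hDs : ∀ a b : Fin (m + 2), (b : ℕ) = (a : ℕ) + 1 → D a b = z) :
    (Matrix.fromBlocks A B Cm D).det = A.det * D.det := by
  have hkey : z ^ 2 * (⅟D) 0 (Fin.last (m + 1)) = 0 := by
    have hadj : z ^ 2 * adjugate D 0 (Fin.last (m + 1)) = 0 := by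
      rw [Matrix.adjugate_apply]
      set N := D.updateRow (Fin.last (m + 1)) (Pi.single (0 : Fin (m + 2)) (1 : R)) with hN
      have hNdet : N.det = (-1 : R) ^ (m + 1) * z ^ (m + 1) := by
        rw [Matrix.det_succ_row N (Fin.last (m + 1))]
        rw [Finset.sum_eq_single (0 : Fin (m + 2))]
        · have h1 : N (Fin.last (m + 1)) 0 = 1 := by
            simp [hN, Matrix.updateRow_self]
          have hminor : (N.submatrix (Fin.last (m + 1)).succAbove
              (0 : Fin (m + 2)).succAbove).det = z ^ (m + 1) := by
            rw [Fin.succAbove_last, Fin.succAbove_zero]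
            have htri : (N.submatrix Fin.castSucc Fin.succ).BlockTriangular OrderDual.toDual := by
              intro i j hij
              have hij' : (i : ℕ) < (j : ℕ) := hij
              simp only [Matrix.submatrix_apply]
              rw [hN, Matrix.updateRow_ne (Fin.ne_of_lt (Fin.castSucc_lt_last i))]
              exact hD0 _ _ (by simp [Fin.val_succ]; omega)
            rw [Matrix.det_of_lowerTriangular _ htri]
            have hdiag : ∀ i : Fin (m + 1),
                (N.submatrix Fin.castSucc Fin.succ) i i = z := by
              intro i
              simp only [Matrix.submatrix_apply]
              rw [hN, Matrix.updateRow_ne (Fin.ne_of_lt (Fin.castSucc_lt_last i))]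
              exact hDs _ _ (by simp [Fin.val_succ])
            calc ∏ i : Fin (m + 1), (N.submatrix Fin.castSucc Fin.succ) i i
                = ∏ _i : Fin (m + 1), z := Finset.prod_congr rfl fun i _ => hdiag i
              _ = z ^ (m + 1) := by simp
          rw [h1, hminor]
          simp [Fin.val_last]
        · intro j _ hj
          have : N (Fin.last (m + 1)) j = 0 := by
            simp [hN, Matrix.updateRow_self, Pi.single_apply, hj]
          rw [this]; ring
        · intro h; exact absurd (Finset.mem_univ _) h
      rw [hNdet]
      have : z ^ 2 * ((-1 : R) ^ (m + 1) * z ^ (m + 1)) = (-1 : R) ^ (m + 1) * z ^ (m + 3) := by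
        ring
      rw [this, hz, mul_zero]
    rw [Matrix.invOf_eq_nonsing_inv, Matrix.inv_def]
    simp only [Matrix.smul_apply, smul_eq_mul]
    calc z ^ 2 * (Ring.inverse D.det * adjugate D 0 (Fin.last (m + 1)))
        = Ring.inverse D.det * (z ^ 2 * adjugate D 0 (Fin.last (m + 1))) := by ring
      _ = 0 := by rw [hadj, mul_zero]
  have hzero : B * ⅟D * Cm = 0 := by
    ext i j
    rw [Matrix.mul_apply]
    rw [Finset.sum_eq_single (Fin.last (m + 1))]
    · rw [Matrix.mul_apply, Finset.sum_eq_single (0 : Fin (m + 2))]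
      · obtain ⟨c, hc⟩ := hBz i
        obtain ⟨c', hc'⟩ := hCz j
        rw [hc, hc']
        show z * c * (⅟D) 0 (Fin.last (m + 1)) * (z * c') = 0
        linear_combination (c * c') * hkey
      · intro a _ ha
        rw [hB0 i a ha, zero_mul]
      · intro h; exact absurd (Finset.mem_univ _) h
    · intro a _ ha
      rw [hC0 a j ha, mul_zero]
    · intro h; exact absurd (Finset.mem_univ _) h
  rw [Matrix.det_fromBlocks₂₂, hzero, sub_zero, mul_comm]

lemma aux_det {R : Type*} [CommRing R] {n m : ℕ} (z : R) (hz : z ^ (m + 3) = 0)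
    (W : Matrix (Fin (n + (m + 2))) (Fin (n + (m + 2))) R)
    (A : Matrix (Fin n) (Fin n) R) (D D₀ : Matrix (Fin (m + 2)) (Fin (m + 2)) R)
    (hA : ∀ i j : Fin n, A i j = W (Fin.castAdd (m + 2) i) (Fin.castAdd (m + 2) j))
    (hD : ∀ a b : Fin (m + 2), D a b = W (Fin.natAdd n a) (Fin.natAdd n b))
    (hDD₀ : D = 1 + z • D₀)
    (hB0 : ∀ (i : Fin n) (a : Fin (m + 2)), a ≠ 0 →
      W (Fin.castAdd (m + 2) i) (Fin.natAdd n a) = 0)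
    (hBz : ∀ i : Fin n, ∃ c, W (Fin.castAdd (m + 2) i) (Fin.natAdd n 0) = z * c)
    (hC0 : ∀ (a : Fin (m + 2)) (j : Fin n), a ≠ Fin.last (m + 1) →
      W (Fin.natAdd n a) (Fin.castAdd (m + 2) j) = 0)
    (hCz : ∀ j : Fin n, ∃ c, W (Fin.natAdd n (Fin.last (m + 1))) (Fin.castAdd (m + 2) j) = z * c)
    (hD0 : ∀ a b : Fin (m + 2), (a : ℕ) + 2 ≤ (b : ℕ) → D a b = 0)
    (hDs : ∀ a b : Fin (m + 2), (b : ℕ) = (a : ℕ) + 1 → D a b = z) :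
    W.det = A.det * D.det := by
  haveI : Invertible D := by
    rw [hDD₀]
    have hnil : IsNilpotent (z • D₀) := ⟨m + 3, by rw [_root_.smul_pow, hz, zero_smul]⟩
    exact hnil.isUnit_one_add.invertible
  let e : Fin n ⊕ Fin (m + 2) ≃ Fin (n + (m + 2)) := finSumFinEquiv
  have hsub : W.det = (W.submatrix e e).det := (Matrix.det_submatrix_equiv_self e W).symm
  rw [hsub]
  have hA' : (W.submatrix e e).toBlocks₁₁ = A := by
    ext i j
    show W (e (Sum.inl i)) (e (Sum.inl j)) = A i j
    rw [hA]
    simp [e]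
  have hD' : (W.submatrix e e).toBlocks₂₂ = D := by
    ext a b
    show W (e (Sum.inr a)) (e (Sum.inr b)) = D a b
    rw [hD]
    simp [e]
  have hblocks : W.submatrix e e
      = Matrix.fromBlocks A ((W.submatrix e e).toBlocks₁₂) ((W.submatrix e e).toBlocks₂₁) D := by
    conv_lhs => rw [← Matrix.fromBlocks_toBlocks (W.submatrix e e)]
    rw [hA', hD']
  rw [hblocks]
  refine aux_key z hz _ _ _ _ ?_ ?_ ?_ ?_ hD0 hDs
  · intro i a ha
    show W (e (Sum.inl i)) (e (Sum.inr a)) = 0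
    simpa [e] using hB0 i a ha
  · intro i
    show ∃ c, W (e (Sum.inl i)) (e (Sum.inr 0)) = z * c
    simpa [e] using hBz i
  · intro a j ha
    show W (e (Sum.inr a)) (e (Sum.inl j)) = 0
    simpa [e] using hC0 a j ha
  · intro j
    show ∃ c, W (e (Sum.inr (Fin.last (m + 1)))) (e (Sum.inl j)) = z * c
    simpa [e] using hCz j


theorem block1_i (n m : ℕ) (hn : 1 ≤ n) (hm : 2 ≤ m)
    (Xm : Matrix (Fin (n + m)) (Fin (n + m)) ℂ)
    (h1 : ∀ i j : Fin (n + m), i.val < n → n + 1 ≤ j.val → Xm i j = 0)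
    (h2 : ∀ i j : Fin (n + m), n ≤ i.val → i.val < n + m - 1 → j.val < n → Xm i j = 0)
    (h3 : ∀ i j : Fin (n + m), n ≤ i.val → n ≤ j.val → i.val + 2 ≤ j.val → Xm i j = 0)
    (h4 : ∀ i j : Fin (n + m), n ≤ i.val → j.val = i.val + 1 → Xm i j = 1)
    (X₁ : Matrix (Fin n) (Fin n) ℂ)
    (hX₁ : ∀ i j : Fin n, X₁ i j = Xm (Fin.castLE (by omega) i) (Fin.castLE (by omega) j))
    (X₂ : Matrix (Fin m) (Fin m) ℂ)
    (hX₂ : ∀ a b : Fin m, X₂ a b = Xm (Fin.natAdd n a) (Fin.natAdd n b)) :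
    ∀ k : ℕ, k ≤ m →
      trLambda Xm k = ∑ a ∈ Finset.range (k + 1), trLambda X₁ a * trLambda X₂ (k - a) := by
  obtain ⟨m', rfl⟩ : ∃ m', m = m' + 2 := ⟨m - 2, by omega⟩
  intro k hk
  classical
  set I : Ideal ℂ[X] := Ideal.span {(X : ℂ[X]) ^ (m' + 3)} with hI
  let φ : ℂ[X] →+* ℂ[X] ⧸ I := Ideal.Quotient.mk I
  set z : ℂ[X] ⧸ I := φ X with hzdef
  have hz : z ^ (m' + 3) = 0 := by
    rw [hzdef, ← map_pow, Ideal.Quotient.eq_zero_iff_mem]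
    exact Ideal.mem_span_singleton.mpr dvd_rfl
  have hmapY : ∀ {N : ℕ} (M : Matrix (Fin N) (Fin N) ℂ) (i j : Fin N),
      (((1 : Matrix (Fin N) (Fin N) ℂ[X]) + (X : ℂ[X]) • M.map C).map φ) i j
        = (if i = j then 1 else 0) + z * φ (C (M i j)) := by
    intro N M i j
    simp only [Matrix.map_apply, Matrix.add_apply, Matrix.smul_apply, Matrix.one_apply,
      smul_eq_mul, map_add, _root_.map_mul, apply_ite φ, _root_.map_one, map_zero, hzdef]
  set W := (((1 : Matrix _ _ ℂ[X]) + (X : ℂ[X]) • Xm.map C).map φ) with hW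
  set A := (((1 : Matrix _ _ ℂ[X]) + (X : ℂ[X]) • X₁.map C).map φ) with hA
  set D := (((1 : Matrix _ _ ℂ[X]) + (X : ℂ[X]) • X₂.map C).map φ) with hD
  have hdet : W.det = A.det * D.det := by
    refine aux_det z hz W A D (X₂.map fun x => φ (C x)) ?_ ?_ ?_ ?_ ?_ ?_ ?_ ?_ ?_
    · -- hA
      intro i j
      rw [hA, hW, hmapY, hmapY]
      have hcast : (Fin.castAdd (m' + 2) i : Fin (n + (m' + 2))) = Fin.castLE (by omega) i := rfl
      have hcast' : (Fin.castAdd (m' + 2) j : Fin (n + (m' + 2))) = Fin.castLE (by omega) j := rfl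
      rw [hcast, hcast', ← hX₁]
      have hiff : (i = j) ↔ (Fin.castLE (show n ≤ n + (m' + 2) by omega) i
          = Fin.castLE (show n ≤ n + (m' + 2) by omega) j) := by
        constructor
        · intro h; rw [h]
        · intro h; exact Fin.ext (by simpa using congrArg Fin.val h)
      rw [if_congr hiff rfl rfl]
    · -- hD
      intro a b
      rw [hD, hW, hmapY, hmapY, ← hX₂]
      have hiff : (a = b) ↔ (Fin.natAdd n a = Fin.natAdd n b) := by
        constructor
        · intro h; rw [h]
        · intro h; exact Fin.ext (by have := congrArg Fin.val h; simpa using this)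
      rw [if_congr hiff rfl rfl]
    · -- hDD₀
      rw [hD]
      ext a b
      rw [hmapY]
      simp only [Matrix.add_apply, Matrix.one_apply, Matrix.smul_apply, Matrix.map_apply,
        smul_eq_mul]
    · -- hB0
      intro i a ha
      rw [hW, hmapY]
      rw [if_neg (by
        intro h
        have := congrArg Fin.val h
        simp only [Fin.coe_castAdd, Fin.coe_natAdd] at this
        omega)]
      rw [h1 _ _ (by simp) (by
        simp only [Fin.coe_natAdd]
        have : 0 < (a : ℕ) := Fin.pos_iff_ne_zero.mpr ha
        omega)]
      simp
    · -- hBz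
      intro i
      refine ⟨φ (C (Xm (Fin.castAdd (m' + 2) i) (Fin.natAdd n 0))), ?_⟩
      rw [hW, hmapY]
      rw [if_neg (by
        intro h
        have := congrArg Fin.val h
        simp only [Fin.coe_castAdd, Fin.coe_natAdd] at this
        omega)]
      rw [zero_add]
    · -- hC0
      intro a j ha
      rw [hW, hmapY]
      rw [if_neg (by
        intro h
        have := congrArg Fin.val h
        simp only [Fin.coe_castAdd, Fin.coe_natAdd] at this
        omega)]
      have hav : (a : ℕ) < m' + 1 := by
        rcases lt_or_eq_of_le (Nat.lt_succ_iff.mp a.isLt) with h | h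
        · omega
        · exact absurd (Fin.ext h) ha
      rw [h2 _ _ (by simp) (by simp only [Fin.coe_natAdd]; omega) (by simp)]
      simp
    · -- hCz
      intro j
      refine ⟨φ (C (Xm (Fin.natAdd n (Fin.last (m' + 1))) (Fin.castAdd (m' + 2) j))), ?_⟩
      rw [hW, hmapY]
      rw [if_neg (by
        intro h
        have := congrArg Fin.val h
        simp only [Fin.coe_castAdd, Fin.coe_natAdd] at this
        omega)]
      rw [zero_add]
    · -- hD0
      intro a b hab
      rw [hD, hmapY]
      rw [if_neg (by
        intro h
        have := congrArg Fin.val h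
        omega)]
      rw [hX₂, h3 _ _ (by simp) (by simp) (by simp only [Fin.coe_natAdd]; omega)]
      simp
    · -- hDs
      intro a b hab
      rw [hD, hmapY]
      rw [if_neg (by
        intro h
        have := congrArg Fin.val h
        omega)]
      rw [hX₂, h4 _ _ (by simp) (by simp only [Fin.coe_natAdd]; omega)]
      simp [hzdef]
  have hφeq : φ (((1 : Matrix _ _ ℂ[X]) + (X : ℂ[X]) • Xm.map C).det)
      = φ ((((1 : Matrix _ _ ℂ[X]) + (X : ℂ[X]) • X₁.map C).det)
          * (((1 : Matrix _ _ ℂ[X]) + (X : ℂ[X]) • X₂.map C).det)) := by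
    rw [_root_.map_mul, RingHom.map_det, RingHom.map_det, RingHom.map_det]
    exact hdet
  have hdvd : (X : ℂ[X]) ^ (m' + 3) ∣
      (((1 : Matrix _ _ ℂ[X]) + (X : ℂ[X]) • Xm.map C).det
        - (((1 : Matrix _ _ ℂ[X]) + (X : ℂ[X]) • X₁.map C).det)
          * (((1 : Matrix _ _ ℂ[X]) + (X : ℂ[X]) • X₂.map C).det)) := by
    rw [← Ideal.mem_span_singleton, ← hI, ← Ideal.Quotient.eq_zero_iff_mem, map_sub,
      sub_eq_zero]
    exact hφeq
  obtain ⟨r, hr⟩ := hdvd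
  have hY : ((1 : Matrix _ _ ℂ[X]) + (X : ℂ[X]) • Xm.map C).det
      = (((1 : Matrix _ _ ℂ[X]) + (X : ℂ[X]) • X₁.map C).det)
          * (((1 : Matrix _ _ ℂ[X]) + (X : ℂ[X]) • X₂.map C).det) + (X : ℂ[X]) ^ (m' + 3) * r :=
    by linear_combination hr
  show (((1 : Matrix _ _ ℂ[X]) + (X : ℂ[X]) • Xm.map C).det).coeff k = _
  rw [hY, Polynomial.coeff_add, mul_comm ((X : ℂ[X]) ^ (m' + 3)) r,
    Polynomial.coeff_mul_X_pow', if_neg (by omega), add_zero, Polynomial.coeff_mul,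
    Finset.Nat.sum_antidiagonal_eq_sum_range_succ_mk]
  rfl
end

section
/- Let n ≥ 1, m ≥ 2, and let λ_1,…,λ_n, μ_1,…,μ_m be complex numbers satisfying λ_1+⋯+λ_n+μ_1+⋯+μ_m = 0. Then e_{m+1}(λ_1,…,λ_n,μ_1,…,μ_m) = (−1)^m·h_{m+1}(λ_1,…,λ_n) + Σ_{j=2}^{m} (−1)^{m−j}·h_{m+1−j}(λ_1,…,λ_n)·e_j(λ_1,…,λ_n,μ_1,…,μ_m). (Equation (added) of the paper, read through the Harish-Chandra coordinates.) -/
/-- The `j`-th elementary symmetric polynomial of a finite family of complex numbers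
(`esymm x 0 = 1`). -/
noncomputable def esymm {ι : Type*} [Fintype ι] [DecidableEq ι] (x : ι → ℂ) (j : ℕ) : ℂ :=
  ∑ s ∈ Finset.powersetCard j (Finset.univ : Finset ι), ∏ i ∈ s, x i

/-- The `k`-th complete homogeneous symmetric polynomial
`h_k(x_1,…,x_N) = Σ_{i_1 ≤ ⋯ ≤ i_k} x_{i_1}⋯x_{i_k}` (`hsymm x 0 = 1`). -/
noncomputable def hsymm {N : ℕ} (x : Fin N → ℂ) (k : ℕ) : ℂ :=
  ∑ f ∈ Finset.univ.filter (fun f : Fin k → Fin N => ∀ a b : Fin k, a ≤ b → f a ≤ f b),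
    ∏ a : Fin k, x (f a)

section Aux
open Finset PowerSeries

theorem coeff_prod_one_add {ι : Type*} [DecidableEq ι] (y : ι → ℂ) (s : Finset ι) (k : ℕ) :
    PowerSeries.coeff k (∏ i ∈ s, (1 + PowerSeries.C (y i) * PowerSeries.X)) =
      ∑ t ∈ s.powersetCard k, ∏ i ∈ t, y i := by
  induction s using Finset.induction_on generalizing k with
  | empty =>
    cases k with
    | zero => simp
    | succ k => rw [Finset.powersetCard_eq_empty.mpr (by simp), Finset.sum_empty]; simp [coeff_one]
  | insert a s hns ih =>
    rw [Finset.prod_insert hns, add_mul, one_mul, mul_assoc, mul_comm (PowerSeries.C (y a)),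
      map_add, coeff_mul_C]
    cases k with
    | zero =>
      simp [ih, coeff_zero_mul_X]
    | succ k =>
      rw [coeff_succ_X_mul, ih, ih, powersetCard_succ_insert hns,
        Finset.sum_union, Finset.sum_image]
      · congr 1
        rw [Finset.sum_mul]
        exact Finset.sum_congr rfl fun t ht => by
          rw [Finset.prod_insert fun h => hns (Finset.mem_powersetCard.mp ht |>.1 h)]; ring
      · intro t ht u hu h
        have hta : a ∉ t := fun h' => hns (Finset.mem_powersetCard.mp ht |>.1 h')
        have hua : a ∉ u := fun h' => hns (Finset.mem_powersetCard.mp hu |>.1 h')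
        have := congrArg (Finset.erase · a) h
        simpa [Finset.erase_insert hta, Finset.erase_insert hua] using this
      · rw [Finset.disjoint_right]
        intro t ht ht'
        simp only [Finset.mem_image] at ht
        obtain ⟨u, hu, rfl⟩ := ht
        exact hns (Finset.mem_powersetCard.mp ht' |>.1 (Finset.mem_insert_self a u))

theorem one_add_mul_geom (a : ℂ) :
    (1 + PowerSeries.C a * PowerSeries.X) * PowerSeries.mk (fun k => (-a) ^ k) = 1 := by
  ext k
  rw [add_mul, one_mul, mul_assoc, mul_comm PowerSeries.X, ← mul_assoc, mul_comm _ PowerSeries.X,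
    map_add]
  cases k with
  | zero => simp
  | succ k =>
    rw [coeff_succ_X_mul, coeff_mk, coeff_C_mul, coeff_mk, coeff_one]
    simp [pow_succ, mul_comm]

theorem prod_map_count {N : ℕ} (x : Fin N → ℂ) (M : Multiset (Fin N)) :
    (M.map x).prod = ∏ i : Fin N, x i ^ M.count i := by
  induction M using Multiset.induction_on with
  | empty => simp
  | cons a M ih =>
    rw [Multiset.map_cons, Multiset.prod_cons, ih]
    have : ∀ i : Fin N, Multiset.count i (a ::ₘ M) = Multiset.count i M + (if i = a then 1 else 0) :=
      fun i => Multiset.count_cons _ _ _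
    simp_rw [this, pow_add, Finset.prod_mul_distrib, pow_ite, pow_one, pow_zero,
      Finset.prod_ite_eq', Finset.mem_univ, if_true]
    ring

theorem sum_count_univ {N : ℕ} (M : Multiset (Fin N)) :
    ∑ i : Fin N, M.count i = Multiset.card M := by
  induction M using Multiset.induction_on with
  | empty => simp
  | cons a M ih =>
    simp_rw [Multiset.count_cons, Finset.sum_add_distrib, ih, Multiset.card_cons]
    simp

theorem hsymm_coeff {N : ℕ} (x : Fin N → ℂ) (k : ℕ) :
    (∑ f ∈ Finset.univ.filter (fun f : Fin k → Fin N => ∀ a b : Fin k, a ≤ b → f a ≤ f b),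
      ∏ a : Fin k, x (f a)) =
    PowerSeries.coeff k (∏ i : Fin N, PowerSeries.mk (fun j => x i ^ j)) := by
  rw [PowerSeries.coeff_prod]
  refine Finset.sum_nbij (fun f => Multiset.toFinsupp (↑(List.ofFn f))) ?_ ?_ ?_ ?_
  · intro f hf
    rw [Finset.mem_finsuppAntidiag]
    refine ⟨?_, fun i _ => Finset.mem_univ i⟩
    have : ∀ i, (Multiset.toFinsupp (↑(List.ofFn f) : Multiset (Fin N))) i
        = Multiset.count i ↑(List.ofFn f) := fun i => Multiset.toFinsupp_apply _ _
    rw [Finset.sum_congr rfl fun i _ => this i, sum_count_univ]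
    simp
  · intro f hf g hg h
    simp only [Finset.coe_filter, Set.mem_setOf_eq, Finset.mem_univ, true_and] at hf hg
    have hperm : (List.ofFn f).Perm (List.ofFn g) := Multiset.coe_eq_coe.mp
      (Multiset.toFinsupp.injective h)
    have hf' : (List.ofFn f).Pairwise (· ≤ ·) := (List.sortedLE_ofFn_iff.mpr fun a b hab => hf a b hab).pairwise
    have hg' : (List.ofFn g).Pairwise (· ≤ ·) := (List.sortedLE_ofFn_iff.mpr fun a b hab => hg a b hab).pairwise
    exact List.ofFn_injective (List.Perm.eq_of_pairwise' hf' hg' hperm)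
  · intro l hl
    simp only [Finset.coe_filter, Set.mem_setOf_eq, Finset.mem_coe] at hl ⊢
    rw [Finset.mem_finsuppAntidiag] at hl
    obtain ⟨hsum, -⟩ := hl
    set L := Multiset.sort (Finsupp.toMultiset l) (· ≤ ·) with hL
    have hlen : L.length = k := by
      rw [Multiset.length_sort, Finsupp.card_toMultiset]
      rw [← hsum]
      exact Finsupp.sum_fintype _ _ (fun _ => rfl)
    refine ⟨fun a : Fin k => L.get (Fin.cast hlen.symm a), ?_, ?_⟩
    · simp only [Finset.mem_coe, Finset.mem_filter, Finset.mem_univ, true_and]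
      intro a b hab
      exact (Multiset.pairwise_sort _ _).sortedLE.monotone_get (by simpa using hab)
    · have h1 : List.ofFn (fun a : Fin k => L.get (Fin.cast hlen.symm a)) = L := by
        apply List.ext_get
        · simp [hlen]
        · intro i h1 h2
          simp [List.get_ofFn]
      show Multiset.toFinsupp (↑(List.ofFn fun a : Fin k => L.get (Fin.cast hlen.symm a))) = l
      rw [h1, hL]
      simp
  · intro f hf
    have h2 : (∏ a : Fin k, x (f a)) = ((↑(List.ofFn f) : Multiset (Fin N)).map x).prod := by
      rw [show ((↑(List.ofFn f) : Multiset (Fin N)).map x) = (↑(List.map x (List.ofFn f)) : Multiset ℂ)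
          from Multiset.map_coe _ _, List.map_ofFn, Multiset.prod_coe, List.prod_ofFn]
      rfl
    rw [h2, prod_map_count]
    refine Finset.prod_congr rfl fun i _ => ?_
    rw [PowerSeries.coeff_mk, Multiset.toFinsupp_apply]
theorem hsymm_zero' {N : ℕ} (x : Fin N → ℂ) : hsymm x 0 = 1 := by
  rw [hsymm]
  rw [Finset.filter_true_of_mem (fun f _ => fun a => a.elim0)]
  simp

theorem hsymm_neg {N : ℕ} (x : Fin N → ℂ) (k : ℕ) :
    hsymm (fun i => -x i) k = (-1) ^ k * hsymm x k := by
  rw [hsymm, hsymm, Finset.mul_sum]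
  refine Finset.sum_congr rfl fun f _ => ?_
  have : ∀ a : Fin k, -x (f a) = (-1) * x (f a) := fun a => by ring
  simp_rw [this, Finset.prod_mul_distrib, Finset.prod_const, Finset.card_univ, Fintype.card_fin]

theorem esymm_coeff {ι : Type*} [Fintype ι] [DecidableEq ι] (y : ι → ℂ) (k : ℕ) :
    esymm y k = PowerSeries.coeff k (∏ i : ι, (1 + PowerSeries.C (y i) * PowerSeries.X)) := by
  rw [coeff_prod_one_add]; rfl

theorem hsymm_coeff' {N : ℕ} (x : Fin N → ℂ) (k : ℕ) :
    hsymm x k = PowerSeries.coeff k (∏ i : Fin N, PowerSeries.mk (fun j => x i ^ j)) :=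
  hsymm_coeff x k


end Aux

open Finset PowerSeries in
theorem eq_added (n m : ℕ) (hn : 1 ≤ n) (hm : 2 ≤ m)
    (lam : Fin n → ℂ) (mu : Fin m → ℂ)
    (hsum : ∑ i, lam i + ∑ j, mu j = 0) :
    esymm (Sum.elim lam mu) (m + 1) =
      (-1 : ℂ) ^ m * hsymm lam (m + 1) +
        ∑ j ∈ Finset.Icc 2 m,
          (-1 : ℂ) ^ (m - j) * hsymm lam (m + 1 - j) * esymm (Sum.elim lam mu) j := by
  set el := Sum.elim lam mu with hel
  set P : PowerSeries ℂ := ∏ i : Fin n, (1 + PowerSeries.C (lam i) * PowerSeries.X) with hP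
  set Q : PowerSeries ℂ := ∏ j : Fin m, (1 + PowerSeries.C (mu j) * PowerSeries.X) with hQ
  set Hn : PowerSeries ℂ := ∏ i : Fin n, PowerSeries.mk (fun j => (-lam i) ^ j) with hHn
  -- Hn * P = 1
  have h1 : Hn * P = 1 := by
    rw [hHn, hP, ← Finset.prod_mul_distrib]
    rw [Finset.prod_congr rfl fun i _ => by rw [mul_comm, one_add_mul_geom (lam i)]]
    exact Finset.prod_const_one
  -- esymm el j = coeff j (P * Q)
  have h2 : ∀ j : ℕ, esymm el j = PowerSeries.coeff j (P * Q) := by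
    intro j
    rw [esymm_coeff el j]
    congr 1
    rw [Fintype.prod_sum_type]
    simp [hel, hP, hQ]
  -- coeff i Hn = (-1)^i * hsymm lam i
  have h3 : ∀ i : ℕ, PowerSeries.coeff i Hn = (-1) ^ i * hsymm lam i := by
    intro i
    rw [← hsymm_neg, hsymm_coeff' (fun a => -lam a) i, hHn]
  -- main identity
  have key : ∑ p ∈ Finset.HasAntidiagonal.antidiagonal (m + 1),
      (-1 : ℂ) ^ p.1 * hsymm lam p.1 * esymm el p.2 = 0 := by
    have : PowerSeries.coeff (m + 1) (Hn * (P * Q)) = PowerSeries.coeff (m + 1) Q := by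
      rw [← mul_assoc, h1, one_mul]
    rw [PowerSeries.coeff_mul] at this
    have hq : PowerSeries.coeff (m + 1) Q = 0 := by
      rw [hQ, coeff_prod_one_add, Finset.powersetCard_eq_empty.mpr (by simp), Finset.sum_empty]
    rw [hq] at this
    rw [← this]
    refine Finset.sum_congr rfl fun p hp => ?_
    rw [h3, h2, mul_assoc]
  rw [Finset.Nat.sum_antidiagonal_eq_sum_range_succ_mk] at key
  -- peel terms
  have hm1 : m - 1 + 1 = m := by omega
  rw [Finset.sum_range_succ, Finset.sum_range_succ] at key
  have key2 : (∑ x ∈ Finset.range m, (-1:ℂ)^x * hsymm lam x * esymm el (m+1-x))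
      + (-1:ℂ)^m * hsymm lam m * esymm el (m+1-m)
      + (-1:ℂ)^(m+1) * hsymm lam (m+1) * esymm el (m+1-(m+1)) = 0 := key
  clear key
  have peel := Finset.sum_range_succ' (fun x => (-1:ℂ)^x * hsymm lam x * esymm el (m+1-x)) (m-1)
  rw [hm1] at peel
  rw [peel] at key2
  -- evaluate special terms
  have e0 : esymm el 0 = 1 := by
    rw [esymm]
    simp
  have e1 : esymm el 1 = 0 := by
    rw [esymm, Finset.powersetCard_one]
    rw [Finset.sum_map]
    simp only [Function.Embedding.coeFn_mk, Finset.prod_singleton]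
    rw [hel, Fintype.sum_sum_type]
    simpa using hsum
  have hr1 : m + 1 - m = 1 := by omega
  have hr2 : m + 1 - (m + 1) = 0 := by omega
  have hr3 : m + 1 - 0 = m + 1 := by omega
  rw [hr1, hr2, hr3, e1, e0, hsymm_zero', pow_zero] at key2
  -- key : Σ_{i∈range(m-1)} (-1)^(i+1) h_{i+1} e_{m+1-(i+1)} + (-1)^0*1*e_{m+1} + (-1)^m h_m * 0 + (-1)^(m+1) h_{m+1} * 1 = 0
  have hsum_eq : ∑ i ∈ Finset.range (m - 1),
        (-1 : ℂ) ^ (i + 1) * hsymm lam (i + 1) * esymm el (m + 1 - (i + 1)) =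
      - ∑ j ∈ Finset.Icc 2 m,
        (-1 : ℂ) ^ (m - j) * hsymm lam (m + 1 - j) * esymm el j := by
    rw [← Finset.sum_neg_distrib]
    refine Finset.sum_nbij' (fun i => m - i) (fun j => m - j) ?_ ?_ ?_ ?_ ?_
    · intro i hi; simp only [Finset.mem_range] at hi; simp only [Finset.mem_Icc]; omega
    · intro j hj; simp only [Finset.mem_Icc] at hj; simp only [Finset.mem_range]; omega
    · intro i hi; simp only [Finset.mem_range] at hi; omega
    · intro j hj; simp only [Finset.mem_Icc] at hj; omega
    · intro i hi
      simp only [Finset.mem_range] at hi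
      have h4 : m - (m - i) = i := by omega
      have h5 : m + 1 - (m - i) = i + 1 := by omega
      rw [h4, h5]
      have h6 : m + 1 - (i + 1) = m - i := by omega
      rw [h6, pow_succ]
      ring
  rw [hsum_eq] at key2
  linear_combination key2
end

section
/- Let n ≥ 1, A an n×n complex matrix, x, y ∈ ℂⁿ and s ∈ ℂ. Then, in ℂ[[τ]], G_{x,y}(A + s·I) = ((1 − sτ)^{n+1})^{−1} · (G_{x,y}(A) substituted at τ ↦ τ·(1 − sτ)^{−1}), where the substitution is composition of formal power series with the series τ·(1 − sτ)^{−1} (which has zero constant term), and (1 − sτ)^{−1} is the multiplicative inverse of 1 − sτ in ℂ[[τ]]. (The generating-function identity Σ_i α_i(y,x)(A+sI_n)τ^i = (1−sτ)^{−n−1} Σ_i α_i(y,x)(A)(τ(1−sτ)^{−1})^i from Appendix A.) -/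
/-- The generating series `G_{x,y}(B) = (Σ_{i,j} x_i ((I − τB)^{-1})_{i,j} y_j) · det(I − τB)^{-1}`
in `ℂ[[τ]]`.  Here `(I − τB)⁻¹` is the matrix inverse over `ℂ[[τ]]` (which is the genuine
two-sided inverse, since `det(I − τB)` has constant term `1`, hence is a unit), and the last
factor uses the power series inverse. -/
noncomputable def genG {n : ℕ} (x y : Fin n → ℂ) (B : Matrix (Fin n) (Fin n) ℂ) :
    PowerSeries ℂ :=
  (∑ i, ∑ j, PowerSeries.C (R := ℂ) (x i) *
      (((1 - (PowerSeries.X : PowerSeries ℂ) • B.map (PowerSeries.C (R := ℂ)) : Matrix (Fin n) (Fin n) (PowerSeries ℂ))⁻¹) i j) * PowerSeries.C (R := ℂ) (y j)) *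
    ((1 - (PowerSeries.X : PowerSeries ℂ) • B.map (PowerSeries.C (R := ℂ))).det)⁻¹

/-- Composition `F(g)` of formal power series, written via coefficients.  When `g` has zero
constant term, `coeff k (g^i) = 0` for `i > k`, so this finite sum is exactly the coefficient
of `τ^k` in the substitution of `g` into `F`. -/
noncomputable def psComp (F g : PowerSeries ℂ) : PowerSeries ℂ :=
  PowerSeries.mk fun k =>
    ∑ i ∈ Finset.range (k + 1), PowerSeries.coeff (R := ℂ) i F * PowerSeries.coeff (R := ℂ) k (g ^ i)

open PowerSeries in
lemma coeff_zero_of_X_pow_dvd {f : PowerSeries ℂ} {m k : ℕ}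
    (h : (X : PowerSeries ℂ) ^ m ∣ f) (hk : k < m) : coeff (R := ℂ) k f = 0 := by
  obtain ⟨t, rfl⟩ := h
  rw [coeff_mul]
  apply Finset.sum_eq_zero
  intro p hp
  rw [coeff_X_pow, if_neg, zero_mul]
  have := Finset.HasAntidiagonal.mem_antidiagonal.mp hp
  omega

open PowerSeries in
lemma coeff_pow_eq_zero {g : PowerSeries ℂ} (hg : constantCoeff (R := ℂ) g = 0) {i k : ℕ}
    (h : k < i) : coeff (R := ℂ) k (g ^ i) = 0 := by
  have hX : (X : PowerSeries ℂ) ∣ g := X_dvd_iff.mpr hg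
  exact coeff_zero_of_X_pow_dvd (pow_dvd_pow_of_dvd hX i) h

open PowerSeries in
lemma coeff_psComp_trunc {g : PowerSeries ℂ} (hg : constantCoeff (R := ℂ) g = 0)
    (F : PowerSeries ℂ) {k m : ℕ} (hkm : k < m) :
    coeff (R := ℂ) k (psComp F g) = coeff (R := ℂ) k (Polynomial.aeval g (trunc m F)) := by
  rw [psComp, coeff_mk, trunc_apply, ← Finset.range_eq_Ico, map_sum, map_sum]
  have : ∀ i ∈ Finset.range m,
      (coeff (R := ℂ) k) ((Polynomial.aeval g) ((Polynomial.monomial i) (coeff (R := ℂ) i F)))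
        = coeff (R := ℂ) i F * coeff (R := ℂ) k (g ^ i) := by
    intro i _
    rw [Polynomial.aeval_monomial, PowerSeries.algebraMap_apply, Algebra.algebraMap_self_apply, coeff_C_mul]
  rw [Finset.sum_congr rfl this]
  refine (Finset.sum_subset (Finset.range_subset_range.mpr hkm) ?_)
  intro i _ hi
  rw [coeff_pow_eq_zero hg (by simpa using hi), mul_zero]

open PowerSeries in
lemma psComp_C {g : PowerSeries ℂ} (a : ℂ) : psComp (C (R := ℂ) a) g = C (R := ℂ) a := by
  ext k
  rw [psComp, coeff_mk]
  rw [Finset.sum_eq_single 0]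
  · simp [coeff_C]
  · intro i _ hi
    rw [coeff_C, if_neg hi, zero_mul]
  · simp

open PowerSeries in
lemma psComp_one {g : PowerSeries ℂ} : psComp 1 g = 1 := by
  simpa using psComp_C (g := g) 1

open PowerSeries in
lemma psComp_X {g : PowerSeries ℂ} (hg : constantCoeff (R := ℂ) g = 0) : psComp X g = g := by
  ext k
  rw [psComp, coeff_mk, Finset.sum_eq_single 1]
  · rcases Nat.eq_zero_or_pos k with rfl | hk
    · simp [hg]
    · simp
  · intro i _ hi
    rw [coeff_X, if_neg hi, zero_mul]
  · intro h
    simp only [Finset.mem_range, not_lt] at h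
    have hk0 : k = 0 := by omega
    subst hk0
    simp [hg]

open PowerSeries in
lemma psComp_add {g : PowerSeries ℂ} (F H : PowerSeries ℂ) :
    psComp (F + H) g = psComp F g + psComp H g := by
  ext k
  simp [psComp, add_mul, Finset.sum_add_distrib]

open PowerSeries in
lemma psComp_mul {g : PowerSeries ℂ} (hg : constantCoeff (R := ℂ) g = 0) (F H : PowerSeries ℂ) :
    psComp (F * H) g = psComp F g * psComp H g := by
  ext k
  have hk : k < k + 1 := Nat.lt_succ_self k
  set m := k + 1 with hm
  -- the difference of truncations is divisible by X^m
  have hD : (Polynomial.X : Polynomial ℂ) ^ m ∣ (trunc m F * trunc m H - trunc m (F * H)) := by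
    rw [Polynomial.X_pow_dvd_iff]
    intro d hd
    rw [Polynomial.coeff_sub, Polynomial.coeff_mul, coeff_trunc, if_pos hd, coeff_mul,
      sub_eq_zero]
    apply Finset.sum_congr rfl
    intro p hp
    have hpd := Finset.HasAntidiagonal.mem_antidiagonal.mp hp
    rw [coeff_trunc, if_pos (by omega), coeff_trunc, if_pos (by omega)]
  obtain ⟨E, hE⟩ := hD
  have htr : trunc m (F * H) = trunc m F * trunc m H - Polynomial.X ^ m * E := by
    rw [← hE]; ring
  rw [coeff_psComp_trunc hg _ hk, htr, map_sub, map_mul, map_mul, map_pow,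
    Polynomial.aeval_X]
  have hz : coeff (R := ℂ) k (g ^ m * Polynomial.aeval g E) = 0 := by
    have hX : (X : PowerSeries ℂ) ∣ g := X_dvd_iff.mpr hg
    exact coeff_zero_of_X_pow_dvd
      (Dvd.dvd.mul_right (pow_dvd_pow_of_dvd hX m) _) hk
  rw [map_sub, hz, sub_zero, coeff_mul, coeff_mul]
  apply Finset.sum_congr rfl
  intro p hp
  have hpd := Finset.HasAntidiagonal.mem_antidiagonal.mp hp
  rw [coeff_psComp_trunc hg F (show p.1 < m by omega),
    coeff_psComp_trunc hg H (show p.2 < m by omega)]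

/-- Substitution of `g` (with zero constant term) as a ring homomorphism. -/
noncomputable def psCompHom (g : PowerSeries ℂ) (hg : PowerSeries.constantCoeff (R := ℂ) g = 0) :
    PowerSeries ℂ →+* PowerSeries ℂ where
  toFun F := psComp F g
  map_one' := psComp_one
  map_mul' := psComp_mul hg
  map_zero' := by simpa using psComp_C (g := g) 0
  map_add' := psComp_add

@[simp] lemma psCompHom_apply (g : PowerSeries ℂ) (hg : PowerSeries.constantCoeff (R := ℂ) g = 0)
    (F : PowerSeries ℂ) : psCompHom g hg F = psComp F g := rfl

open PowerSeries in
lemma constantCoeff_psComp {g : PowerSeries ℂ} (F : PowerSeries ℂ) :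
    constantCoeff (R := ℂ) (psComp F g) = constantCoeff (R := ℂ) F := by
  rw [← coeff_zero_eq_constantCoeff_apply, ← coeff_zero_eq_constantCoeff_apply, psComp,
    coeff_mk]
  simp

open PowerSeries in
lemma psComp_inv {g : PowerSeries ℂ} (hg : constantCoeff (R := ℂ) g = 0) (F : PowerSeries ℂ)
    (hF : constantCoeff (R := ℂ) F ≠ 0) : psComp F⁻¹ g = (psComp F g)⁻¹ := by
  have hc : constantCoeff (R := ℂ) (psComp F g) ≠ 0 := by rwa [constantCoeff_psComp]
  rw [PowerSeries.eq_inv_iff_mul_eq_one hc, ← psComp_mul hg,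
    PowerSeries.inv_mul_cancel F hF, psComp_one]

open PowerSeries in
lemma constCoeff_det_one_sub {n : ℕ} (c : PowerSeries ℂ) (hc : constantCoeff (R := ℂ) c = 0)
    (B : Matrix (Fin n) (Fin n) ℂ) :
    constantCoeff (R := ℂ) (1 - c • B.map (C (R := ℂ)) : Matrix (Fin n) (Fin n) (PowerSeries ℂ)).det = 1 := by
  rw [RingHom.map_det]
  have h1 : (1 - c • B.map (C (R := ℂ)) : Matrix (Fin n) (Fin n) (PowerSeries ℂ)).map
      (constantCoeff (R := ℂ)) = 1 := by
    ext i j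
    simp [Matrix.map_apply, Matrix.sub_apply, Matrix.smul_apply, smul_eq_mul, hc,
      Matrix.one_apply, apply_ite (constantCoeff (R := ℂ))]
  rw [RingHom.mapMatrix_apply, h1, Matrix.det_one]

theorem genG_shift (n : ℕ) (hn : 1 ≤ n) (A : Matrix (Fin n) (Fin n) ℂ)
    (x y : Fin n → ℂ) (s : ℂ) :
    genG x y (A + s • 1) =
      ((1 - PowerSeries.C (R := ℂ) s * PowerSeries.X) ^ (n + 1))⁻¹ *
        psComp (genG x y A) (PowerSeries.X * (1 - PowerSeries.C (R := ℂ) s * PowerSeries.X)⁻¹) := by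
  classical
  set u : PowerSeries ℂ := 1 - PowerSeries.C (R := ℂ) s * PowerSeries.X with hu_def
  have hu : PowerSeries.constantCoeff (R := ℂ) u = 1 := by simp [hu_def]
  have hu0 : PowerSeries.constantCoeff (R := ℂ) u ≠ 0 := by rw [hu]; exact one_ne_zero
  set g : PowerSeries ℂ := PowerSeries.X * u⁻¹ with hg_def
  have hg : PowerSeries.constantCoeff (R := ℂ) g = 0 := by
    simp [hg_def, map_mul]
  have hug : u * g = PowerSeries.X := by
    rw [hg_def, mul_left_comm, PowerSeries.mul_inv_cancel u hu0, mul_one]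
  set φ := psCompHom g hg with hφ
  set M₀ : Matrix (Fin n) (Fin n) (PowerSeries ℂ) :=
    1 - (PowerSeries.X : PowerSeries ℂ) • A.map (PowerSeries.C (R := ℂ)) with hM₀
  set N : Matrix (Fin n) (Fin n) (PowerSeries ℂ) :=
    1 - g • A.map (PowerSeries.C (R := ℂ)) with hN
  set M : Matrix (Fin n) (Fin n) (PowerSeries ℂ) :=
    1 - (PowerSeries.X : PowerSeries ℂ) • (A + s • 1).map (PowerSeries.C (R := ℂ)) with hM
  -- constant coefficients of determinants
  have hdM₀ : PowerSeries.constantCoeff (R := ℂ) M₀.det = 1 := constCoeff_det_one_sub _ (by simp) A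
  have hdN : PowerSeries.constantCoeff (R := ℂ) N.det = 1 := constCoeff_det_one_sub _ hg A
  have hdM₀u : IsUnit M₀.det := by
    rw [PowerSeries.isUnit_iff_constantCoeff, hdM₀]; exact isUnit_one
  have hdNu : IsUnit N.det := by
    rw [PowerSeries.isUnit_iff_constantCoeff, hdN]; exact isUnit_one
  -- M = u • N
  have hMuN : M = u • N := by
    refine Matrix.ext fun i j => ?_
    simp only [hM, hN, Matrix.sub_apply, Matrix.smul_apply, Matrix.one_apply,
      Matrix.map_apply, Matrix.add_apply, smul_eq_mul, map_add, mul_sub]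
    rw [← mul_assoc, hug]
    by_cases h : i = j <;>
      simp only [h, if_true, if_false, hu_def, map_mul, map_one, mul_one, map_zero,
        mul_zero, add_zero] <;> ring
  -- φ maps M₀ to N
  have hM₀N : M₀.map φ = N := by
    ext i j
    simp only [hM₀, hN, Matrix.map_apply, Matrix.sub_apply, Matrix.smul_apply,
      Matrix.one_apply, smul_eq_mul, map_sub, map_mul, apply_ite φ, map_one, map_zero]
    rw [psCompHom_apply, psCompHom_apply, psComp_X hg, psComp_C]
  -- inverses
  have hNinv : N * N⁻¹ = 1 := Matrix.mul_nonsing_inv _ hdNu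
  have hM₀inv : M₀ * M₀⁻¹ = 1 := Matrix.mul_nonsing_inv _ hdM₀u
  have hMinv : M⁻¹ = u⁻¹ • N⁻¹ := by
    apply Matrix.inv_eq_right_inv
    rw [hMuN, Matrix.smul_mul, Matrix.mul_smul, smul_smul,
      PowerSeries.mul_inv_cancel u hu0, hNinv, one_smul]
  have hmapinv : (M₀⁻¹).map φ = N⁻¹ := by
    symm
    apply Matrix.inv_eq_right_inv
    calc N * (M₀⁻¹).map φ = M₀.map φ * (M₀⁻¹).map φ := by rw [hM₀N]
      _ = (M₀ * M₀⁻¹).map φ := by rw [Matrix.map_mul]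
      _ = 1 := by rw [hM₀inv, Matrix.map_one φ (map_zero φ) (map_one φ)]
  have hdet_map : φ M₀.det = N.det := by rw [RingHom.map_det, RingHom.mapMatrix_apply, hM₀N]
  have hdetinv_map : φ (M₀.det⁻¹) = N.det⁻¹ := by
    rw [psCompHom_apply, psComp_inv hg _ (by rw [hdM₀]; exact one_ne_zero), ← psCompHom_apply g hg,
      hdet_map]
  -- compute the RHS substitution
  have hsub : psComp (genG x y A) g =
      (∑ i, ∑ j, PowerSeries.C (R := ℂ) (x i) * (N⁻¹ i j) * PowerSeries.C (R := ℂ) (y j)) * N.det⁻¹ := by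
    have : psComp (genG x y A) g = φ (genG x y A) := rfl
    rw [this, genG, map_mul, hdetinv_map]
    congr 1
    rw [map_sum]
    apply Finset.sum_congr rfl
    intro i _
    rw [map_sum]
    apply Finset.sum_congr rfl
    intro j _
    rw [map_mul, map_mul]
    have h1 : φ (M₀⁻¹ i j) = N⁻¹ i j := by
      rw [← hmapinv]; rfl
    rw [h1, psCompHom_apply, psCompHom_apply, psComp_C, psComp_C]
  -- compute the LHS
  have hdetM : M.det = u ^ n * N.det := by
    rw [hMuN, Matrix.det_smul, Fintype.card_fin]
  rw [genG, hsub]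
  rw [hMinv, hdetM]
  have hsum : (∑ i, ∑ j, PowerSeries.C (R := ℂ) (x i) * ((u⁻¹ • N⁻¹) i j) * PowerSeries.C (R := ℂ) (y j))
      = u⁻¹ * ∑ i, ∑ j, PowerSeries.C (R := ℂ) (x i) * (N⁻¹ i j) * PowerSeries.C (R := ℂ) (y j) := by
    rw [Finset.mul_sum]
    apply Finset.sum_congr rfl
    intro i _
    rw [Finset.mul_sum]
    apply Finset.sum_congr rfl
    intro j _
    simp only [Matrix.smul_apply, smul_eq_mul]
    ring
  rw [hsum, PowerSeries.mul_inv_rev, pow_succ, PowerSeries.mul_inv_rev]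
  ring
end

section
/- Fix integers n ≥ 1, m ≥ 2 and complex numbers ζ_0,…,ζ_{m−2}; set ζ(z) := z^m + Σ_{i=0}^{m−2} ζ_i z^i ∈ ℂ[z]. Suppose f, w ∈ ℂ[z] satisfy: f(z) − f(z−1) equals the n-th derivative of the polynomial z^n·ζ(z); w has degree at most m; and Δ^{n−1}(z^n·w(z)) = f(z), where Δ is the linear operator on ℂ[z] defined by (Δp)(z) := p(z+1/2) − p(z−1/2). Then the coefficient of z^m in w equals 1 and the coefficient of z^{m−1} in w equals (n+m)/2. (The facts w_m = 1 and w_{m−1} = (n+m)/2 used in Section 4.6.) -/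
open Polynomial Finset

private lemma eval_of_coeff_bound (h : ℂ[X]) (N : ℕ) (hN : ∀ j, N < j → h.coeff j = 0) (x : ℂ) :
    h.eval x = ∑ i ∈ Finset.range (N + 1), h.coeff i * x ^ i :=
  eval_eq_sum_range' (Nat.lt_succ_of_le (natDegree_le_iff_coeff_eq_zero.mpr hN)) x

private lemma coeff_comp_sub (q : ℂ[X]) (c : ℂ) (k : ℕ) :
    (q.comp (X - C c)).coeff k = (hasseDeriv k q).eval (-c) := by
  have h : X - C c = X + C (-c) := by rw [map_neg]; ring
  rw [h, ← taylor_apply, taylor_coeff]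

private lemma coeff_comp_add (q : ℂ[X]) (c : ℂ) (k : ℕ) :
    (q.comp (X + C c)).coeff k = (hasseDeriv k q).eval c := by
  rw [← taylor_apply, taylor_coeff]

private lemma step (Δ : ℂ[X] → ℂ[X])
    (hΔ : ∀ p : ℂ[X], Δ p = p.comp (X + C (1 / 2 : ℂ)) - p.comp (X - C (1 / 2 : ℂ)))
    (d : ℕ) (q : ℂ[X]) (hq : ∀ k, d + 2 < k → q.coeff k = 0) :
    (∀ k, d + 1 < k → (Δ q).coeff k = 0) ∧
    (Δ q).coeff (d + 1) = ((d : ℂ) + 2) * q.coeff (d + 2) ∧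
    (Δ q).coeff d = ((d : ℂ) + 1) * q.coeff (d + 1) := by
  have key : ∀ k, (Δ q).coeff k
      = (hasseDeriv k q).eval (1/2 : ℂ) - (hasseDeriv k q).eval (-(1/2 : ℂ)) := by
    intro k
    rw [hΔ, coeff_sub, coeff_comp_add, coeff_comp_sub]
  have hc : ∀ k j, d + 2 < j + k → (hasseDeriv k q).coeff j = 0 := by
    intro k j h
    rw [hasseDeriv_coeff, hq _ h, mul_zero]
  refine ⟨?_, ?_, ?_⟩
  · intro k hk
    rw [key, eval_of_coeff_bound _ 0 (fun j hj => hc k j (by omega)),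
      eval_of_coeff_bound _ 0 (fun j hj => hc k j (by omega))]
    simp
  · have expand : (Δ q).coeff (d + 1) = (hasseDeriv (d+1) q).coeff 1 := by
      rw [key, eval_of_coeff_bound _ 1 (fun j hj => hc _ j (by omega)),
        eval_of_coeff_bound _ 1 (fun j hj => hc _ j (by omega))]
      simp only [Finset.sum_range_succ, Finset.sum_range_zero]
      ring
    rw [expand, hasseDeriv_coeff, show 1 + (d+1) = d + 2 from by omega]
    have : ((d+2).choose (d+1) : ℂ) = (d : ℂ) + 2 := by
      rw [show d + 2 = (d+1) + 1 from by omega, Nat.choose_succ_self_right]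
      push_cast; ring
    rw [this]
  · have expand : (Δ q).coeff d = (hasseDeriv d q).coeff 1 := by
      rw [key, eval_of_coeff_bound _ 2 (fun j hj => hc _ j (by omega)),
        eval_of_coeff_bound _ 2 (fun j hj => hc _ j (by omega))]
      simp only [Finset.sum_range_succ, Finset.sum_range_zero]
      ring
    rw [expand, hasseDeriv_coeff]
    have : ((1+d).choose d : ℂ) = (d : ℂ) + 1 := by
      rw [show 1 + d = d + 1 from by omega, Nat.choose_succ_self_right]
      push_cast; ring
    rw [this, show 1 + d = d + 1 from by omega]

private lemma iter (Δ : ℂ[X] → ℂ[X])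
    (hΔ : ∀ p : ℂ[X], Δ p = p.comp (X + C (1 / 2 : ℂ)) - p.comp (X - C (1 / 2 : ℂ))) :
    ∀ (j e : ℕ) (q : ℂ[X]), (∀ k, j + (e + 1) < k → q.coeff k = 0) →
    (∀ k, e + 1 < k → (Δ^[j] q).coeff k = 0) ∧
    (Δ^[j] q).coeff (e + 1) = (∏ i ∈ Finset.range j, ((e + 2 + i : ℕ) : ℂ)) * q.coeff (j + (e + 1)) ∧
    (Δ^[j] q).coeff e = (∏ i ∈ Finset.range j, ((e + 1 + i : ℕ) : ℂ)) * q.coeff (j + e) := by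
  intro j
  induction j with
  | zero => intro e q hq; simpa using fun k hk => hq k (by omega)
  | succ j ih =>
    intro e q hq
    obtain ⟨s0, s1, s2⟩ := step Δ hΔ (j + e) q (fun k hk => hq k (by omega))
    obtain ⟨t0, t1, t2⟩ := ih e (Δ q) (fun k hk => s0 k (by omega))
    rw [Function.iterate_succ_apply]
    refine ⟨t0, ?_, ?_⟩
    · rw [t1, show j + (e+1) = (j+e) + 1 from by omega, s1, Finset.prod_range_succ]
      rw [show e + 2 + j = (j + e) + 2 from by omega, show j+1+(e+1) = j+e+2 from by omega]
      push_cast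
      ring
    · rw [t2, show j + e = (j + e) from rfl, s2, Finset.prod_range_succ]
      rw [show e + 1 + j = (j + e) + 1 from by omega, show j+1+e = j+e+1 from by omega]
      push_cast
      ring

theorem w_top_coeffs (n m : ℕ) (hn : 1 ≤ n) (hm : 2 ≤ m) (ζc : Fin (m - 1) → ℂ)
    (ζ : ℂ[X]) (hζ : ζ = X ^ m + ∑ i : Fin (m - 1), C (ζc i) * X ^ (i.val))
    (f w : ℂ[X])
    (hf : f - f.comp (X - 1) = (⇑derivative)^[n] (X ^ n * ζ))
    (hw : w.degree ≤ m)
    (Δ : ℂ[X] → ℂ[X])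
    (hΔ : ∀ p : ℂ[X], Δ p = p.comp (X + C (1 / 2 : ℂ)) - p.comp (X - C (1 / 2 : ℂ)))
    (hfw : Δ^[n - 1] (X ^ n * w) = f) :
    w.coeff m = 1 ∧ w.coeff (m - 1) = (n + m : ℂ) / 2 := by
  obtain ⟨ν, rfl⟩ : ∃ ν, n = ν + 1 := ⟨n - 1, by omega⟩
  obtain ⟨e, rfl⟩ : ∃ e, m = e + 2 := ⟨m - 2, by omega⟩
  simp only [Nat.add_sub_cancel] at hfw
  rw [show e + 2 - 1 = e + 1 from by omega]
  set c : ℂ := (1/2 : ℂ) with hc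
  set P : ℂ[X] := X ^ (ν+1) * w with hP
  set Q : ℂ[X] := P.comp (X - C c) with hQ
  -- coefficient bounds for P
  have hPd : P.natDegree ≤ (ν+1) + (e+2) := by
    refine le_trans natDegree_mul_le ?_
    have h1 : (X ^ (ν+1) : ℂ[X]).natDegree ≤ ν + 1 := natDegree_X_pow_le (ν+1)
    have h2 : w.natDegree ≤ e + 2 := natDegree_le_iff_degree_le.mpr hw
    omega
  have hPb : ∀ k, (ν+1) + (e+2) < k → P.coeff k = 0 :=
    fun k hk => coeff_eq_zero_of_natDegree_lt (lt_of_le_of_lt hPd hk)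
  have hcP : ∀ k j, (ν+1) + (e+2) < j + k → (hasseDeriv k P).coeff j = 0 := by
    intro k j h
    rw [hasseDeriv_coeff, hPb _ h, mul_zero]
  have hQb : ∀ k, (ν+1) + (e+2) < k → Q.coeff k = 0 := by
    intro k hk
    rw [hQ, coeff_comp_sub, eval_of_coeff_bound _ 0 (fun j hj => hcP k j (by omega))]
    simp only [Finset.sum_range_succ, Finset.sum_range_zero, pow_zero, mul_one, zero_add]
    exact hcP k 0 (by omega)
  have hPw2 : P.coeff ((e+2)+(ν+1)) = w.coeff (e+2) := by
    rw [hP, coeff_X_pow_mul]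
  have hPw1 : P.coeff ((e+1)+(ν+1)) = w.coeff (e+1) := by
    rw [hP, coeff_X_pow_mul]
  -- top coefficients of Q
  have hQtop : Q.coeff ((e+2)+(ν+1)) = w.coeff (e+2) := by
    rw [hQ, coeff_comp_sub, eval_of_coeff_bound _ 0 (fun j hj => hcP _ j (by omega))]
    simp only [Finset.sum_range_succ, Finset.sum_range_zero, pow_zero, mul_one, zero_add]
    rw [hasseDeriv_coeff, zero_add, Nat.choose_self, ← hPw2]
    push_cast; ring
  have hQsub : Q.coeff ((e+1)+(ν+1))
      = w.coeff (e+1) - ((ν:ℂ) + 1 + (e+2)) / 2 * w.coeff (e+2) := by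
    rw [hQ, coeff_comp_sub, eval_of_coeff_bound _ 1 (fun j hj => hcP _ j (by omega))]
    simp only [Finset.sum_range_succ, Finset.sum_range_zero, pow_zero, pow_one, mul_one, zero_add]
    rw [hasseDeriv_coeff, hasseDeriv_coeff, zero_add, Nat.choose_self,
      show 1 + ((e+1)+(ν+1)) = ((e+1)+(ν+1)) + 1 from by omega, Nat.choose_succ_self_right,
      show ((e+1)+(ν+1)) + 1 = (e+2)+(ν+1) from by omega, hPw2, hPw1]
    rw [hc]
    push_cast
    ring
  -- Δ commutes with translation
  have hcomm : ∀ p : ℂ[X], Δ (p.comp (X - C c)) = (Δ p).comp (X - C c) := by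
    intro p
    rw [hΔ, hΔ, sub_comp]
    simp only [comp_assoc]
    have h1 : ((X : ℂ[X]) - C c).comp (X + C c) = (X + C c).comp (X - C c) := by
      simp only [sub_comp, add_comp, X_comp, C_comp]
      ring
    rw [h1]
  have hiter : ∀ (j : ℕ) (p : ℂ[X]), Δ^[j] (p.comp (X - C c)) = (Δ^[j] p).comp (X - C c) := by
    intro j
    induction j with
    | zero => intro p; simp
    | succ j ih =>
      intro p
      rw [Function.iterate_succ_apply, hcomm, ih, ← Function.iterate_succ_apply]
  -- identify Δ^[ν+1] Q with the iterated derivative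
  have hCc : (C c + C c : ℂ[X]) = 1 := by
    rw [← C_add, hc]
    norm_num
  have hΔnQ : Δ^[ν+1] Q = (⇑derivative)^[ν+1] (X ^ (ν+1) * ζ) := by
    rw [Function.iterate_succ_apply', hQ, hiter, hfw, ← hf, hΔ, comp_assoc, comp_assoc]
    have h1 : ((X : ℂ[X]) - C c).comp (X + C c) = X := by
      simp only [sub_comp, add_comp, X_comp, C_comp]
      ring
    have h2 : ((X : ℂ[X]) - C c).comp (X - C c) = X - 1 := by
      simp only [sub_comp, X_comp, C_comp]
      rw [sub_sub, hCc]
    rw [h1, h2, comp_X]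
  -- apply the iteration lemma
  obtain ⟨z0, z1, z2⟩ := iter Δ hΔ (ν+1) (e+1) Q (fun k hk => hQb k (by omega))
  -- coefficients of ζ
  have hζ2 : ζ.coeff (e+2) = 1 := by
    rw [hζ, coeff_add, coeff_X_pow, if_pos rfl, finset_sum_coeff]
    rw [Finset.sum_eq_zero, add_zero]
    intro i _
    rw [coeff_C_mul, coeff_X_pow, if_neg (by have := i.isLt; omega), mul_zero]
  have hζ1 : ζ.coeff (e+1) = 0 := by
    rw [hζ, coeff_add, coeff_X_pow, if_neg (by omega), finset_sum_coeff]
    rw [Finset.sum_eq_zero, add_zero]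
    intro i _
    rw [coeff_C_mul, coeff_X_pow, if_neg (by have := i.isLt; omega), mul_zero]
  -- coefficients of the RHS
  have hR2 : ((⇑derivative)^[ν+1] (X ^ (ν+1) * ζ)).coeff (e+2)
      = (((e+2)+(ν+1)).descFactorial (ν+1) : ℂ) := by
    rw [coeff_iterate_derivative, coeff_X_pow_mul, hζ2, nsmul_eq_mul, mul_one]
  have hR1 : ((⇑derivative)^[ν+1] (X ^ (ν+1) * ζ)).coeff (e+1) = 0 := by
    rw [coeff_iterate_derivative, coeff_X_pow_mul, hζ1, smul_zero]
  -- products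
  have hprod2 : (((e+2)+(ν+1)).descFactorial (ν+1) : ℂ)
      = ∏ i ∈ Finset.range (ν+1), ((e + 1 + 2 + i : ℕ) : ℂ) := by
    rw [Nat.descFactorial_eq_prod_range, Nat.cast_prod,
      ← Finset.prod_range_reflect (fun i => ((e + 1 + 2 + i : ℕ) : ℂ)) (ν+1)]
    refine Finset.prod_congr rfl fun j hj => ?_
    have hj' := Finset.mem_range.mp hj
    congr 1
    omega
  have hprod1 : (((e+1)+(ν+1)).descFactorial (ν+1) : ℂ)
      = ∏ i ∈ Finset.range (ν+1), ((e + 1 + 1 + i : ℕ) : ℂ) := by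
    rw [Nat.descFactorial_eq_prod_range, Nat.cast_prod,
      ← Finset.prod_range_reflect (fun i => ((e + 1 + 1 + i : ℕ) : ℂ)) (ν+1)]
    refine Finset.prod_congr rfl fun j hj => ?_
    have hj' := Finset.mem_range.mp hj
    congr 1
    omega
  have hne2 : (∏ i ∈ Finset.range (ν+1), ((e + 1 + 2 + i : ℕ) : ℂ)) ≠ 0 :=
    Finset.prod_ne_zero_iff.mpr fun i _ => Nat.cast_ne_zero.mpr (by omega)
  have hne1 : (∏ i ∈ Finset.range (ν+1), ((e + 1 + 1 + i : ℕ) : ℂ)) ≠ 0 :=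
    Finset.prod_ne_zero_iff.mpr fun i _ => Nat.cast_ne_zero.mpr (by omega)
  -- conclude
  have hw2 : w.coeff (e+2) = 1 := by
    have e1 : (Δ^[ν+1] Q).coeff (e+1+1)
        = (((e+2)+(ν+1)).descFactorial (ν+1) : ℂ) := by
      rw [hΔnQ, show e+1+1 = e+2 from by omega, hR2]
    rw [z1, hprod2, show (ν+1) + (e+1+1) = (e+2)+(ν+1) from by omega, hQtop] at e1
    exact mul_left_cancel₀ hne2 (by rw [e1, mul_one])
  have hQ1 : Q.coeff ((e+1)+(ν+1)) = 0 := by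
    have e1 : (Δ^[ν+1] Q).coeff (e+1) = 0 := by rw [hΔnQ, hR1]
    rw [z2, show (ν+1) + (e+1) = (e+1)+(ν+1) from by omega] at e1
    exact mul_left_cancel₀ hne1 (by rw [e1, mul_zero])
  refine ⟨hw2, ?_⟩
  rw [hQsub, hw2, mul_one] at hQ1
  rw [sub_eq_zero.mp hQ1]
  push_cast
  ring
end
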